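/- Let F(v) = √(49v² + 105·(1+4v+√(1+8v))/8) − 7v for v ≥ 0. Then F(22/49) = 11/2, and F(v) ≤ 11/2 for all v ≥ 0. -/
import Mathlib


/-- The function `F(v) = √(49v² + 105λ₀(v)) − 7v` attains its maximum value
`11/2` at `v = 22/49`, recovering Hall's bound `Λ ≥ √(11/2)`. -/
theorem hall_optimization :
    (Real.sqrt (49 * (22 / 49 : ℝ) ^ 2 +
        105 * ((1 + 4 * (22 / 49 : ℝ) + Real.sqrt (1 + 8 * (22 / 49 : ℝ))) / 8)) -
      7 * (22 / 49 : ℝ) = 11 / 2) ∧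
    ∀ v : ℝ, 0 ≤ v →
      Real.sqrt (49 * v ^ 2 + 105 * ((1 + 4 * v + Real.sqrt (1 + 8 * v)) / 8)) - 7 * v ≤
        11 / 2 := by
  constructor
  · have h1 : (1 + 8 * (22 / 49 : ℝ)) = (15 / 7 : ℝ) ^ 2 := by norm_num
    have h2 : Real.sqrt (1 + 8 * (22 / 49 : ℝ)) = 15 / 7 := by
      rw [h1, Real.sqrt_sq (by norm_num)]
    rw [h2]
    have h3 : (49 * (22 / 49 : ℝ) ^ 2 +
        105 * ((1 + 4 * (22 / 49 : ℝ) + (15 / 7 : ℝ)) / 8)) = (121 / 14 : ℝ) ^ 2 := by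
      norm_num
    rw [h3, Real.sqrt_sq (by norm_num)]
    norm_num
  · intro v hv
    set s := Real.sqrt (1 + 8 * v) with hs
    have hs0 : 0 ≤ s := Real.sqrt_nonneg _
    have hs2 : s ^ 2 = 1 + 8 * v := Real.sq_sqrt (by linarith)
    have key : 49 * v ^ 2 + 105 * ((1 + 4 * v + s) / 8) ≤ (11 / 2 + 7 * v) ^ 2 := by
      -- reduces to 105 s ≤ 137 + 196 v
      have hb : 105 * s ≤ 137 + 196 * v := by
        nlinarith [sq_nonneg (49 * v - 22), sq_nonneg (105 * s - (137 + 196 * v)), hs2]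
      nlinarith
    have := Real.sqrt_le_sqrt key
    rw [Real.sqrt_sq (by linarith)] at this
    linarith
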